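/- Let k ≥ 0, d ≥ 1 be integers, N > k+1, n = N^d, and C > 0. Let f : [0,1]^d → ℝ be such that for every j ∈ {1,…,d} and every x_{-j} in the (d−1)-dimensional lattice {1/N,…,1}^{d−1}, the univariate slice φ_{j,x_{-j}} : [0,1] → ℝ, t ↦ f evaluated with the j-th coordinate equal to t and the other coordinates equal to x_{-j}, is k times differentiable with k-th derivative of bounded variation, and assume Σ_{j=1}^d Σ_{x_{-j}} TV( φ_{j,x_{-j}}^{(k)} ; [0,1] ) ≤ C, where TV denotes univariate total variation. Let θ_f ∈ ℝ^n be the restriction of f to the lattice Z_{n,d} = {1/N,…,1}^d. Then ‖D_{n,d}^{(k+1)} θ_f‖₁ ≤ c₁ C, for a constant c₁ > 0 depending only on k and d. -/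

import Mathlib

open scoped BigOperators ENNReal NNReal
open MeasureTheory ProbabilityTheory Matrix

noncomputable section

/-- Univariate forward difference matrix `D^{(1)}_M ∈ ℝ^{(M-1)×M}`, with entries
`(D^{(1)}_M)_{i,i} = -1`, `(D^{(1)}_M)_{i,i+1} = 1` and `0` otherwise. -/
def D1 (M : ℕ) : Matrix (Fin (M - 1)) (Fin M) ℝ :=
  Matrix.of fun i j => if (j : ℕ) = (i : ℕ) then -1 else if (j : ℕ) = (i : ℕ) + 1 then 1 else 0

/-- Univariate difference operator of order `m` on `N` points:
`D^{(0)}_N = I_N` and `D^{(m+1)}_N = D^{(1)}_{N-m} D^{(m)}_N`.  In particular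
`Dop N (k+1)` is the operator `D_N^{(k+1)} ∈ ℝ^{(N-k-1) × N}`. -/
def Dop (N : ℕ) : (m : ℕ) → Matrix (Fin (N - m)) (Fin N) ℝ
  | 0 => Matrix.of fun i j => if (i : ℕ) = (j : ℕ) then 1 else 0
  | m + 1 => D1 (N - m) * Dop N m

/-- Row index type of the order-`m` KTF penalty matrix: a coordinate direction `j`,
a row index of the univariate operator, and the values of the other `d-1` lattice
coordinates. -/
abbrev KtfIdx (N d m : ℕ) :=
  Σ j : Fin d, Fin (N - m) × ({l : Fin d // l ≠ j} → Fin N)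

/-- Order-`m` KTF penalty matrix on the lattice `{1,…,N}^d`: the vertical block
concatenation over coordinate directions `j` of `I_N ⊗ ⋯ ⊗ D^{(m)}_N ⊗ ⋯ ⊗ I_N`
(`D^{(m)}_N` in the `j`-th factor). -/
def ktfMat (N d m : ℕ) : Matrix (KtfIdx N d m) (Fin d → Fin N) ℝ :=
  Matrix.of fun p x =>
    Dop N m p.2.1 (x p.1) *
      ∏ l : {l : Fin d // l ≠ p.1}, (if p.2.2 l = x l.1 then (1:ℝ) else 0)

namespace KTVAux

open Set intervalIntegral

/-- forward difference operator with step `h` -/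
def fd (h : ℝ) (ψ : ℝ → ℝ) : ℝ → ℝ := fun x => ψ (x + h) - ψ x

lemma fd_iterate_succ' (h : ℝ) (ψ : ℝ → ℝ) (m : ℕ) (x : ℝ) :
    (fd h)^[m + 1] ψ x = (fd h)^[m] ψ (x + h) - (fd h)^[m] ψ x := by
  rw [Function.iterate_succ_apply']; rfl

lemma fd_iterate_succ (h : ℝ) (ψ : ℝ → ℝ) (m : ℕ) :
    (fd h)^[m + 1] ψ = (fd h)^[m] (fd h ψ) := by
  rw [Function.iterate_succ_apply]

/-- integrable on all subintervals of `[0,1]` -/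
def Int01 (g : ℝ → ℝ) : Prop :=
  ∀ a b : ℝ, 0 ≤ a → a ≤ b → b ≤ 1 → IntervalIntegrable g volume a b

lemma int01_of_continuousOn {g : ℝ → ℝ} (hg : ContinuousOn g (Icc 0 1)) : Int01 g := by
  intro a b ha hab hb
  apply ContinuousOn.intervalIntegrable
  apply hg.mono
  rw [uIcc_of_le hab]
  exact Icc_subset_Icc ha hb

lemma int01_of_bv {g : ℝ → ℝ} (hg : eVariationOn g (Icc 0 1) ≠ ⊤) : Int01 g := by
  have hbv : LocallyBoundedVariationOn g (Icc 0 1) := by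
    intro a b _ _
    exact fun h => hg (eq_top_mono (eVariationOn.mono g inter_subset_left) h)
  obtain ⟨p, q, hp, hq, rfl⟩ := hbv.exists_monotoneOn_sub_monotoneOn
  intro a b ha hab hb
  have hsub : uIcc a b ⊆ Icc 0 1 := by rw [uIcc_of_le hab]; exact Icc_subset_Icc ha hb
  exact ((hp.mono hsub).intervalIntegrable).sub ((hq.mono hsub).intervalIntegrable)

lemma int_shift {g : ℝ → ℝ} (Hg : Int01 g) {c h : ℝ} (hc : 0 ≤ c) (hh : 0 ≤ h)
    (h1 : c + h ≤ 1) : IntervalIntegrable (fun s => g (c + s)) volume 0 h := by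
  have := (Hg c (c + h) hc (by linarith) h1).comp_add_left c
  simpa using this

lemma fdIter_shift_integrable {g : ℝ → ℝ} (Hg : Int01 g) {h : ℝ} (hh : 0 ≤ h) :
    ∀ (m : ℕ) (c : ℝ), 0 ≤ c → c + (m + 1) * h ≤ 1 →
      IntervalIntegrable (fun s => (fd h)^[m] g (c + s)) volume 0 h := by
  intro m
  induction m with
  | zero =>
    intro c hc h1
    simp only [Function.iterate_zero, id_eq]
    exact int_shift Hg hc hh (by push_cast at h1; linarith)
  | succ m IH =>
    intro c hc h1
    have h1' : c + h + (m + 1) * h ≤ 1 := by push_cast at h1 ⊢; linarith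
    have e : (fun s => (fd h)^[m + 1] g (c + s)) =
        (fun s => (fd h)^[m] g ((c + h) + s)) - (fun s => (fd h)^[m] g (c + s)) := by
      funext s
      simp only [Pi.sub_apply, fd_iterate_succ' h g m (c + s)]
      ring_nf
    rw [e]
    exact (IH (c + h) (by linarith) h1').sub
      (IH c hc (by push_cast at h1 ⊢; linarith))

lemma fdIter_integral_comm {g : ℝ → ℝ} (Hg : Int01 g) {h : ℝ} (hh : 0 ≤ h) :
    ∀ (m : ℕ) (c : ℝ), 0 ≤ c → c + (m + 1) * h ≤ 1 →
      (fd h)^[m] (fun y => ∫ s in (0:ℝ)..h, g (y + s)) c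
        = ∫ s in (0:ℝ)..h, (fd h)^[m] g (c + s) := by
  intro m
  induction m with
  | zero => intro c _ _; simp
  | succ m IH =>
    intro c hc h1
    have h1' : c + h + (m + 1) * h ≤ 1 := by push_cast at h1 ⊢; linarith
    have h1'' : c + (m + 1) * h ≤ 1 := by push_cast at h1 ⊢; nlinarith
    rw [fd_iterate_succ', IH (c + h) (by linarith) h1', IH c hc h1'',
      ← intervalIntegral.integral_sub
        (fdIter_shift_integrable Hg hh m (c + h) (by linarith) h1')
        (fdIter_shift_integrable Hg hh m c hc h1'')]
    apply intervalIntegral.integral_congr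
    intro s _
    show (fd h)^[m] g (c + h + s) - (fd h)^[m] g (c + s) = (fd h)^[m + 1] g (c + s)
    rw [fd_iterate_succ' h g m (c + s)]
    ring_nf

lemma fd_eq_integral {ψ ψ' : ℝ → ℝ} (hψ : DifferentiableOn ℝ ψ (Icc 0 1))
    (hderiv : Set.EqOn ψ' (derivWithin ψ (Icc 0 1)) (Icc 0 1)) (Hg : Int01 ψ')
    {y h : ℝ} (hy : 0 ≤ y) (hh : 0 ≤ h) (h1 : y + h ≤ 1) :
    fd h ψ y = ∫ s in (0:ℝ)..h, ψ' (y + s) := by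
  have hftc : ∫ t in y..(y + h), ψ' t = ψ (y + h) - ψ y := by
    apply intervalIntegral.integral_eq_sub_of_hasDeriv_right_of_le (by linarith)
    · exact (hψ.continuousOn).mono (Icc_subset_Icc hy h1)
    · intro x hx
      have hxI : x ∈ Icc (0:ℝ) 1 := ⟨le_of_lt (lt_of_le_of_lt hy hx.1), le_trans hx.2.le h1⟩
      rw [hderiv hxI]
      apply ((hψ x hxI).hasDerivWithinAt).mono_of_mem_nhdsWithin
      rw [mem_nhdsWithin]
      refine ⟨Iio 1, isOpen_Iio, lt_of_lt_of_le hx.2 h1, ?_⟩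
      intro z hz
      exact ⟨le_of_lt (lt_of_le_of_lt (le_trans hy hx.1.le) hz.2), hz.1.le⟩
    · exact Hg y (y + h) hy (by linarith) h1
  have hsub : ∫ s in (0:ℝ)..h, ψ' (y + s) = ∫ t in y..(y + h), ψ' t := by
    rw [intervalIntegral.integral_comp_add_left ψ' y]
    norm_num
  rw [hsub, hftc]; rfl

lemma fdIter_congr (h : ℝ) :
    ∀ (m : ℕ) (F G : ℝ → ℝ) (c : ℝ),
      (∀ j : ℕ, j ≤ m → F (c + j * h) = G (c + j * h)) →
      (fd h)^[m] F c = (fd h)^[m] G c := by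
  intro m
  induction m with
  | zero =>
    intro F G c hFG
    simpa using hFG 0 le_rfl
  | succ m IH =>
    intro F G c hFG
    rw [fd_iterate_succ', fd_iterate_succ']
    have e1 := IH F G (c + h) (fun j hj => by
      have := hFG (j + 1) (by omega)
      push_cast at this ⊢
      calc F (c + h + j * h) = F (c + (j + 1) * h) := by ring_nf
        _ = G (c + (j + 1) * h) := this
        _ = G (c + h + j * h) := by ring_nf)
    have e2 := IH F G c (fun j hj => hFG j (by omega))
    rw [e1, e2]

lemma sum_abs_fd_le (ψ : ℝ → ℝ) {a h : ℝ} (L : ℕ) (ha : 0 ≤ a) (hh : 0 ≤ h)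
    (h1 : a + L * h ≤ 1) (hvar : eVariationOn ψ (Icc 0 1) ≠ ⊤) :
    ∑ i ∈ Finset.range L, |fd h ψ (a + i * h)| ≤ (eVariationOn ψ (Icc 0 1)).toReal := by
  set u : ℕ → ℝ := fun i => a + (min i L) * h with hu
  have humono : Monotone u := by
    intro i j hij
    dsimp [u]
    have : ((min i L : ℕ) : ℝ) ≤ ((min j L : ℕ) : ℝ) :=
      Nat.cast_le.2 (min_le_min hij le_rfl)
    nlinarith
  have hus : ∀ i, u i ∈ Icc (0:ℝ) 1 := by
    intro i
    constructor
    · dsimp [u]; positivity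
    · dsimp [u]
      have : ((min i L : ℕ) : ℝ) ≤ (L : ℝ) := Nat.cast_le.2 (min_le_right _ _)
      nlinarith
  have key := eVariationOn.sum_le (f := ψ) (n := L) humono hus
  have hterm : ∀ i ∈ Finset.range L,
      edist (ψ (u (i + 1))) (ψ (u i)) = ENNReal.ofReal |fd h ψ (a + i * h)| := by
    intro i hi
    rw [Finset.mem_range] at hi
    have hui : u i = a + i * h := by
      dsimp [u]; rw [min_eq_left (by omega : i ≤ L)]
    have hui' : u (i + 1) = a + i * h + h := by
      dsimp [u]; rw [min_eq_left (by omega : i + 1 ≤ L)]; push_cast; ring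
    rw [hui, hui', edist_dist, Real.dist_eq]
    rfl
  calc ∑ i ∈ Finset.range L, |fd h ψ (a + i * h)|
      = (ENNReal.ofReal (∑ i ∈ Finset.range L, |fd h ψ (a + i * h)|)).toReal := by
        rw [ENNReal.toReal_ofReal (Finset.sum_nonneg fun i _ => abs_nonneg _)]
    _ ≤ (eVariationOn ψ (Icc 0 1)).toReal := by
        apply ENNReal.toReal_mono hvar
        rw [ENNReal.ofReal_sum_of_nonneg (fun i _ => abs_nonneg _)]
        rw [← Finset.sum_congr rfl hterm]
        exact key

lemma key : ∀ (m : ℕ) (ψ : ℝ → ℝ) (a h : ℝ) (L : ℕ),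
    0 ≤ a → 0 < h → a + (L + m) * h ≤ 1 →
    (∀ j : ℕ, j < m → DifferentiableOn ℝ (iteratedDerivWithin j ψ (Icc 0 1)) (Icc 0 1)) →
    eVariationOn (iteratedDerivWithin m ψ (Icc 0 1)) (Icc 0 1) ≠ ⊤ →
    ∑ i ∈ Finset.range L, |(fd h)^[m + 1] ψ (a + i * h)| ≤
      (eVariationOn (iteratedDerivWithin m ψ (Icc 0 1)) (Icc 0 1)).toReal := by
  intro m
  induction m with
  | zero =>
    intro ψ a h L ha hh h1 _ hvar
    rw [iteratedDerivWithin_zero] at hvar ⊢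
    simpa using sum_abs_fd_le ψ L ha hh.le (by push_cast at h1 ⊢; linarith) hvar
  | succ m IH =>
    intro ψ a h L ha hh h1 hdiff hvar
    rcases Nat.eq_zero_or_pos L with rfl | hL
    · simp [ENNReal.toReal_nonneg]
    have hI : UniqueDiffOn ℝ (Icc (0:ℝ) 1) := uniqueDiffOn_Icc one_pos
    set ψ' := iteratedDerivWithin 1 ψ (Icc 0 1) with hψ'
    have hderiv : Set.EqOn ψ' (derivWithin ψ (Icc 0 1)) (Icc 0 1) :=
      fun x _ => congrFun iteratedDerivWithin_one x
    have E : ∀ j : ℕ, Set.EqOn (iteratedDerivWithin j ψ' (Icc 0 1))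
        (iteratedDerivWithin (j + 1) ψ (Icc 0 1)) (Icc 0 1) := by
      intro j x hx
      have e1 : iteratedDerivWithin j ψ' (Icc 0 1) x
          = iteratedDerivWithin j (derivWithin ψ (Icc 0 1)) (Icc 0 1) x :=
        iteratedDerivWithin_congr hderiv hx
      rw [e1, iteratedDerivWithin_succ']
    have hdiff0 : DifferentiableOn ℝ ψ (Icc 0 1) := by
      have := hdiff 0 (by omega)
      rwa [iteratedDerivWithin_zero] at this
    have hdiff' : ∀ j : ℕ, j < m →
        DifferentiableOn ℝ (iteratedDerivWithin j ψ' (Icc 0 1)) (Icc 0 1) := by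
      intro j hj
      exact (hdiff (j + 1) (by omega)).congr (fun x hx => E j hx)
    have hvar' : eVariationOn (iteratedDerivWithin m ψ' (Icc 0 1)) (Icc 0 1) ≠ ⊤ := by
      rwa [eVariationOn.eq_of_eqOn (E m)]
    have hVeq : (eVariationOn (iteratedDerivWithin m ψ' (Icc 0 1)) (Icc 0 1))
        = eVariationOn (iteratedDerivWithin (m + 1) ψ (Icc 0 1)) (Icc 0 1) := by
      rw [eVariationOn.eq_of_eqOn (E m)]
    have Hg : Int01 ψ' := by
      rcases Nat.eq_zero_or_pos m with rfl | hm
      · exact int01_of_bv hvar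
      · exact int01_of_continuousOn (hdiff 1 (by omega)).continuousOn
    have hh1 : h ≤ 1 := by
      have hc1 : (1:ℝ) ≤ ((L:ℝ) + ((m:ℝ) + 1)) := by
        have : (1:ℝ) ≤ (L:ℝ) := by exact_mod_cast hL
        linarith
      have hc2 := mul_le_mul_of_nonneg_right hc1 hh.le
      push_cast at h1
      linarith
    have hterm : ∀ i ∈ Finset.range L,
        (fd h)^[m + 1 + 1] ψ (a + i * h)
          = ∫ s in (0:ℝ)..h, (fd h)^[m + 1] ψ' ((a + i * h) + s) := by
      intro i hi
      rw [Finset.mem_range] at hi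
      have hx0 : (0:ℝ) ≤ a + i * h := by positivity
      have hxtop : a + i * h + (m + 2) * h ≤ 1 := by
        have : (i:ℝ) ≤ (L:ℝ) - 1 := by
          have : (i:ℝ) + 1 ≤ (L:ℝ) := by exact_mod_cast hi
          linarith
        push_cast at h1 ⊢
        nlinarith
      rw [fd_iterate_succ]
      have e1 : (fd h)^[m + 1] (fd h ψ) (a + i * h)
          = (fd h)^[m + 1] (fun y => ∫ s in (0:ℝ)..h, ψ' (y + s)) (a + i * h) := by
        apply fdIter_congr
        intro j hj
        apply fd_eq_integral hdiff0 hderiv Hg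
        · positivity
        · exact hh.le
        · have : (j:ℝ) ≤ (m:ℝ) + 1 := by exact_mod_cast hj
          nlinarith
      rw [e1]
      exact fdIter_integral_comm Hg hh.le (m + 1) (a + i * h) hx0
        (by push_cast at hxtop ⊢; linarith)
    rw [Finset.sum_congr rfl (fun i hi => by rw [hterm i hi])]
    have hint : ∀ i ∈ Finset.range L,
        IntervalIntegrable (fun s => |(fd h)^[m + 1] ψ' ((a + i * h) + s)|) volume 0 h := by
      intro i hi
      rw [Finset.mem_range] at hi
      apply IntervalIntegrable.abs
      apply fdIter_shift_integrable Hg hh.le (m + 1) (a + i * h) (by positivity)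
      have : (i:ℝ) ≤ (L:ℝ) - 1 := by
        have : (i:ℝ) + 1 ≤ (L:ℝ) := by exact_mod_cast hi
        linarith
      push_cast at h1 ⊢
      nlinarith
    set V := (eVariationOn (iteratedDerivWithin (m + 1) ψ (Icc 0 1)) (Icc 0 1)).toReal with hV
    calc ∑ i ∈ Finset.range L, |∫ s in (0:ℝ)..h, (fd h)^[m + 1] ψ' ((a + i * h) + s)|
        ≤ ∑ i ∈ Finset.range L, ∫ s in (0:ℝ)..h, |(fd h)^[m + 1] ψ' ((a + i * h) + s)| :=
          Finset.sum_le_sum (fun i _ =>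
            intervalIntegral.abs_integral_le_integral_abs hh.le)
      _ = ∫ s in (0:ℝ)..h, ∑ i ∈ Finset.range L, |(fd h)^[m + 1] ψ' ((a + i * h) + s)| :=
          (intervalIntegral.integral_finset_sum hint).symm
      _ ≤ ∫ s in (0:ℝ)..h, V := by
          have hsumint : IntervalIntegrable
              (fun s => ∑ i ∈ Finset.range L, |(fd h)^[m + 1] ψ' ((a + i * h) + s)|)
              volume 0 h := by
            have := IntervalIntegrable.sum (μ := volume) (Finset.range L)
              (f := fun i => fun s => |(fd h)^[m + 1] ψ' ((a + i * h) + s)|) hint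
            have e : (fun s => ∑ i ∈ Finset.range L, |(fd h)^[m + 1] ψ' ((a + i * h) + s)|)
                = ∑ i ∈ Finset.range L, fun s => |(fd h)^[m + 1] ψ' ((a + i * h) + s)| := by
              funext s
              simp [Finset.sum_apply]
            rw [e]
            exact this
          apply intervalIntegral.integral_mono_on hh.le hsumint intervalIntegrable_const
          intro s hs
          have := IH ψ' (a + s) h L (by linarith [hs.1]) hh
            (by push_cast at h1 ⊢; linarith [hs.2]) hdiff' hvar'
          rw [hVeq] at this
          calc ∑ i ∈ Finset.range L, |(fd h)^[m + 1] ψ' ((a + i * h) + s)|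
              = ∑ i ∈ Finset.range L, |(fd h)^[m + 1] ψ' ((a + s) + i * h)| := by
                apply Finset.sum_congr rfl; intro i _; ring_nf
            _ ≤ V := this
      _ = h * V := by rw [intervalIntegral.integral_const]; simp
      _ ≤ V := by
          have hV0 : 0 ≤ V := ENNReal.toReal_nonneg
          nlinarith

lemma d1_apply (M : ℕ) (v : Fin M → ℝ) (i : Fin (M - 1)) :
    (D1 M *ᵥ v) i = v ⟨(i : ℕ) + 1, by omega⟩ - v ⟨(i : ℕ), by omega⟩ := by
  have hi := i.isLt
  have hkey : ∀ j : Fin M,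
      (if (j : ℕ) = (i : ℕ) then (-1:ℝ) else if (j : ℕ) = (i : ℕ) + 1 then 1 else 0) * v j
      = (if j = (⟨(i : ℕ) + 1, by omega⟩ : Fin M) then v j else 0)
        + (if j = (⟨(i : ℕ), by omega⟩ : Fin M) then -(v j) else 0) := by
    intro j
    simp only [Fin.ext_iff]
    split_ifs with h1 h2 h3
    all_goals first | ring1 | (exfalso; omega)
  simp only [Matrix.mulVec, dotProduct, D1, Matrix.of_apply]
  rw [Finset.sum_congr rfl (fun j _ => hkey j), Finset.sum_add_distrib,
    Finset.sum_ite_eq' Finset.univ _ (fun j => v j),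
    Finset.sum_ite_eq' Finset.univ _ (fun j => -(v j))]
  simp
  ring_nf

lemma dop_apply (N : ℕ) (ψ : ℝ → ℝ) (g : Fin N → ℝ)
    (hg : ∀ t : Fin N, g t = ψ (((t : ℕ) + 1 : ℝ) / N)) :
    ∀ (m : ℕ) (i : Fin (N - m)),
      (Dop N m *ᵥ g) i = (fd (1 / N))^[m] ψ (((i : ℕ) + 1 : ℝ) / N) := by
  intro m
  induction m with
  | zero =>
    intro i
    have hi : (i : ℕ) < N := i.isLt
    simp only [Dop, Matrix.mulVec, dotProduct, Matrix.of_apply]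
    rw [Finset.sum_eq_single (⟨(i : ℕ), hi⟩ : Fin N)]
    · simp [hg]
    · intro j _ hj
      rw [if_neg, zero_mul]
      intro hcon
      exact hj (by simp [Fin.ext_iff, ← hcon])
    · simp
  | succ m IH =>
    intro i
    have hi := i.isLt
    show ((D1 (N - m) * Dop N m) *ᵥ g) i = _
    rw [← Matrix.mulVec_mulVec]
    have e0 : (D1 (N - m) *ᵥ (Dop N m *ᵥ g)) i
        = (Dop N m *ᵥ g) ⟨(i : ℕ) + 1, by omega⟩ - (Dop N m *ᵥ g) ⟨(i : ℕ), by omega⟩ :=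
      d1_apply (N - m) (Dop N m *ᵥ g) ⟨(i : ℕ), by omega⟩
    rw [e0, IH ⟨(i : ℕ) + 1, by omega⟩, IH ⟨(i : ℕ), by omega⟩,
      fd_iterate_succ' (1 / N) ψ m]
    congr 1
    push_cast
    ring

lemma slice_bound {N k : ℕ} (hN : k + 1 < N) (φ : ℝ → ℝ) (g : Fin N → ℝ)
    (hg : ∀ t : Fin N, g t = φ (((t : ℕ) + 1 : ℝ) / N))
    (hdiff : ∀ m : ℕ, m < k →
      DifferentiableOn ℝ (iteratedDerivWithin m φ (Icc (0:ℝ) 1)) (Icc (0:ℝ) 1))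
    (hvar : eVariationOn (iteratedDerivWithin k φ (Icc (0:ℝ) 1)) (Icc (0:ℝ) 1) ≠ ⊤) :
    ∑ i : Fin (N - (k + 1)), |((Dop N (k + 1)) *ᵥ g) i| ≤
      (eVariationOn (iteratedDerivWithin k φ (Icc (0:ℝ) 1)) (Icc (0:ℝ) 1)).toReal := by
  have hN0 : (0:ℝ) < N := by
    have : 0 < N := by omega
    exact_mod_cast this
  have hrw := dop_apply N φ g hg (k + 1)
  have e1 : ∀ i : Fin (N - (k + 1)),
      |((Dop N (k + 1)) *ᵥ g) i|
        = |(fd (1 / (N:ℝ)))^[k + 1] φ (1 / N + ((i : ℕ) : ℝ) * (1 / N))| := by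
    intro i
    rw [hrw i]
    congr 1
    push_cast
    ring
  rw [Finset.sum_congr rfl (fun i _ => e1 i),
    Fin.sum_univ_eq_sum_range
      (fun i : ℕ => |(fd (1 / (N:ℝ)))^[k + 1] φ (1 / N + (i : ℝ) * (1 / N))|) (N - (k + 1))]
  apply key k φ (1 / N) (1 / N) (N - (k + 1)) (by positivity) (by positivity) ?_ hdiff hvar
  have hc : ((N - (k + 1) : ℕ) : ℝ) = (N : ℝ) - ((k : ℝ) + 1) := by
    rw [Nat.cast_sub hN.le]
    push_cast
    ring
  rw [hc]
  have : (1:ℝ) / N + (((N:ℝ) - ((k:ℝ) + 1)) + k) * (1 / N) = 1 := by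
    field_simp
    ring
  linarith

end KTVAux

/-- Lemma: functions with bounded continuum KTV have lattice
evaluations with bounded discrete KTV.  If every axis-parallel univariate slice of
`f : [0,1]^d → ℝ` through the lattice is `k` times differentiable and the total sum of
the total variations of the `k`-th derivatives of these slices is at most `C`, then
the lattice evaluation `θ_f` of `f` satisfies `‖D_{n,d}^{(k+1)} θ_f‖₁ ≤ c₁ C`, for a
constant `c₁ > 0` depending only on `k, d`. -/
theorem ktv_continuous_to_discrete (k d : ℕ) (hd : 1 ≤ d) :
    ∃ c₁ : ℝ, 0 < c₁ ∧
      ∀ N : ℕ, k + 1 < N → ∀ C : ℝ, 0 < C →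
      ∀ f : (Fin d → ℝ) → ℝ,
        (∀ (j : Fin d) (w : {l : Fin d // l ≠ j} → Fin N), ∀ m < k,
          DifferentiableOn ℝ
            (iteratedDerivWithin m
              (fun t => f (fun l => if h : l = j then t else ((w ⟨l, h⟩ : ℕ) + 1 : ℝ) / N))
              (Set.Icc (0:ℝ) 1)) (Set.Icc (0:ℝ) 1)) →
        (∑ j : Fin d, ∑ w : {l : Fin d // l ≠ j} → Fin N,
            eVariationOn
              (iteratedDerivWithin k
                (fun t => f (fun l => if h : l = j then t else ((w ⟨l, h⟩ : ℕ) + 1 : ℝ) / N))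
                (Set.Icc (0:ℝ) 1))
              (Set.Icc (0:ℝ) 1)) ≤ ENNReal.ofReal C →
        ∑ p, |(ktfMat N d (k + 1)).mulVec
            (fun x : Fin d → Fin N => f (fun l => ((x l : ℕ) + 1 : ℝ) / N)) p| ≤
          c₁ * C := by
  classical
  refine ⟨1, one_pos, ?_⟩
  intro N hN C hC f hdiff hvar
  set V : (j : Fin d) → ({l : Fin d // l ≠ j} → Fin N) → ℝ≥0∞ := fun j w =>
    eVariationOn
      (iteratedDerivWithin k
        (fun t => f (fun l => if h : l = j then t else ((w ⟨l, h⟩ : ℕ) + 1 : ℝ) / N))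
        (Set.Icc (0:ℝ) 1))
      (Set.Icc (0:ℝ) 1) with hV
  have hvar' : (∑ j : Fin d, ∑ w : {l : Fin d // l ≠ j} → Fin N, V j w) ≤ ENNReal.ofReal C :=
    hvar
  have hVne : ∀ (j : Fin d) (w : {l : Fin d // l ≠ j} → Fin N), V j w ≠ ⊤ := by
    intro j w
    have h1 : V j w ≤ ∑ w' : {l : Fin d // l ≠ j} → Fin N, V j w' :=
      Finset.single_le_sum (f := fun w' => V j w') (fun _ _ => by simp) (Finset.mem_univ w)
    have h2 : (∑ w' : {l : Fin d // l ≠ j} → Fin N, V j w') ≤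
        ∑ j' : Fin d, ∑ w' : {l : Fin d // l ≠ j'} → Fin N, V j' w' :=
      Finset.single_le_sum
        (f := fun j' => ∑ w' : {l : Fin d // l ≠ j'} → Fin N, V j' w')
        (fun _ _ => by simp) (Finset.mem_univ j)
    exact ne_top_of_le_ne_top ENNReal.ofReal_ne_top ((h1.trans h2).trans hvar')
  -- identify each row block with a univariate difference operator
  have hmv : ∀ (j : Fin d) (i : Fin (N - (k + 1))) (w : {l : Fin d // l ≠ j} → Fin N),
      (ktfMat N d (k + 1)).mulVec
          (fun x : Fin d → Fin N => f (fun l => ((x l : ℕ) + 1 : ℝ) / N)) ⟨j, (i, w)⟩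
        = ((Dop N (k + 1)) *ᵥ (fun t : Fin N =>
            f (fun l => if h : l = j then (((t : ℕ) + 1 : ℝ) / N)
              else ((w ⟨l, h⟩ : ℕ) + 1 : ℝ) / N))) i := by
    intro j i w
    set e := Equiv.funSplitAt j (Fin N) with he
    show (∑ x : Fin d → Fin N,
        (Dop N (k + 1) i (x j) *
          ∏ l : {l : Fin d // l ≠ j}, (if w l = x l.1 then (1:ℝ) else 0)) *
          f (fun l => ((x l : ℕ) + 1 : ℝ) / N)) = _
    rw [← Equiv.sum_comp e.symm (fun x : Fin d → Fin N =>
        (Dop N (k + 1) i (x j) *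
          ∏ l : {l : Fin d // l ≠ j}, (if w l = x l.1 then (1:ℝ) else 0)) *
          f (fun l => ((x l : ℕ) + 1 : ℝ) / N)),
      Fintype.sum_prod_type]
    show (∑ t : Fin N, ∑ w' : {l : Fin d // l ≠ j} → Fin N, _) = _
    refine Finset.sum_congr rfl fun t _ => ?_
    have h1 : ∀ w' : {l : Fin d // l ≠ j} → Fin N, (e.symm (t, w')) j = t := by
      intro w'
      simp [he]
    have h2 : ∀ (w' : {l : Fin d // l ≠ j} → Fin N) (l : {l : Fin d // l ≠ j}),
        (e.symm (t, w')) l.1 = w' l := by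
      intro w' l
      simp [he, l.2]
    have h3 : ∀ w' : {l : Fin d // l ≠ j} → Fin N,
        (∏ l : {l : Fin d // l ≠ j}, if w l = (e.symm (t, w')) l.1 then (1:ℝ) else 0)
          = if w' = w then 1 else 0 := by
      intro w'
      by_cases hww : w' = w
      · subst hww
        simp [h2]
      · rw [if_neg hww]
        obtain ⟨l, hl⟩ := Function.ne_iff.1 hww
        refine Finset.prod_eq_zero (Finset.mem_univ l) ?_
        rw [h2, if_neg (fun hc => hl hc.symm)]
    have h4 : (fun l => (((e.symm (t, w)) l : ℕ) + 1 : ℝ) / N)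
        = (fun l => if h : l = j then (((t : ℕ) + 1 : ℝ) / N)
            else ((w ⟨l, h⟩ : ℕ) + 1 : ℝ) / N) := by
      funext l
      by_cases hl : l = j
      · subst hl
        rw [dif_pos rfl, h1 w]
      · rw [dif_neg hl, h2 w ⟨l, hl⟩]
    calc (∑ w' : {l : Fin d // l ≠ j} → Fin N,
          (Dop N (k + 1) i ((e.symm (t, w')) j) *
            ∏ l : {l : Fin d // l ≠ j}, (if w l = (e.symm (t, w')) l.1 then (1:ℝ) else 0)) *
            f (fun l => (((e.symm (t, w')) l : ℕ) + 1 : ℝ) / N))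
        = ∑ w' : {l : Fin d // l ≠ j} → Fin N,
            (if w' = w then
              Dop N (k + 1) i t * f (fun l => (((e.symm (t, w')) l : ℕ) + 1 : ℝ) / N)
            else 0) := by
          refine Finset.sum_congr rfl fun w' _ => ?_
          rw [h1 w', h3 w']
          by_cases hww : w' = w
          · simp [hww]
          · simp [hww]
      _ = Dop N (k + 1) i t * f (fun l => (((e.symm (t, w)) l : ℕ) + 1 : ℝ) / N) := by
          rw [Finset.sum_ite_eq' Finset.univ w
            (fun w' => Dop N (k + 1) i t *
              f (fun l => (((e.symm (t, w')) l : ℕ) + 1 : ℝ) / N))]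
          simp
      _ = Dop N (k + 1) i t *
            f (fun l => if h : l = j then (((t : ℕ) + 1 : ℝ) / N)
              else ((w ⟨l, h⟩ : ℕ) + 1 : ℝ) / N) := by rw [h4]
  -- main computation
  calc ∑ p : KtfIdx N d (k + 1), |(ktfMat N d (k + 1)).mulVec
          (fun x : Fin d → Fin N => f (fun l => ((x l : ℕ) + 1 : ℝ) / N)) p|
      = ∑ j : Fin d, ∑ w : {l : Fin d // l ≠ j} → Fin N, ∑ i : Fin (N - (k + 1)),
          |((Dop N (k + 1)) *ᵥ (fun t : Fin N =>
            f (fun l => if h : l = j then (((t : ℕ) + 1 : ℝ) / N)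
              else ((w ⟨l, h⟩ : ℕ) + 1 : ℝ) / N))) i| := by
        rw [← Finset.univ_sigma_univ, Finset.sum_sigma]
        refine Finset.sum_congr rfl fun j _ => ?_
        rw [Fintype.sum_prod_type, Finset.sum_comm]
        refine Finset.sum_congr rfl fun w _ => Finset.sum_congr rfl fun i _ => ?_
        rw [hmv j i w]
    _ ≤ ∑ j : Fin d, ∑ w : {l : Fin d // l ≠ j} → Fin N, (V j w).toReal := by
        refine Finset.sum_le_sum fun j _ => Finset.sum_le_sum fun w _ => ?_
        exact KTVAux.slice_bound hN
          (fun t => f (fun l => if h : l = j then t else ((w ⟨l, h⟩ : ℕ) + 1 : ℝ) / N))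
          _ (fun t => rfl) (hdiff j w) (hVne j w)
    _ ≤ C := by
        have hinner : ∀ j : Fin d, (∑ w : {l : Fin d // l ≠ j} → Fin N, V j w) ≠ ⊤ := by
          intro j
          exact (ENNReal.sum_lt_top.2 fun w _ => (hVne j w).lt_top).ne
        calc ∑ j : Fin d, ∑ w : {l : Fin d // l ≠ j} → Fin N, (V j w).toReal
            = (∑ j : Fin d, ∑ w : {l : Fin d // l ≠ j} → Fin N, V j w).toReal := by
              rw [ENNReal.toReal_sum (fun j _ => hinner j)]
              exact Finset.sum_congr rfl fun j _ =>
                (ENNReal.toReal_sum (fun w _ => hVne j w)).symm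
          _ ≤ (ENNReal.ofReal C).toReal :=
              ENNReal.toReal_mono ENNReal.ofReal_ne_top hvar'
          _ = C := ENNReal.toReal_ofReal hC.le
    _ = 1 * C := (one_mul C).symm
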